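/- For every univariate polynomial S ∈ ℝ[X], the total degree of the two-variable polynomial Q + S(P) in ℝ[x,y] is at least 25. (Consequently no Pinchuk map, all of which have the form (P, Q + S(P)), has total degree less than 25.) -/
import Mathlib

open MvPolynomial

/-- `t = xy − 1`, with `X 0 = x`, `X 1 = y`. -/
noncomputable def tP : MvPolynomial (Fin 2) ℝ := X 0 * X 1 - 1

/-- `h = t(xt + 1)`. -/
noncomputable def hP : MvPolynomial (Fin 2) ℝ := tP * (X 0 * tP + 1)

/-- `f = (xt + 1)²(t² + y)`. -/
noncomputable def fP : MvPolynomial (Fin 2) ℝ := (X 0 * tP + 1) ^ 2 * (tP ^ 2 + X 1)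

/-- `P = f + h`. -/
noncomputable def PP : MvPolynomial (Fin 2) ℝ := fP + hP

/-- The auxiliary polynomial `u(f,h)`. -/
noncomputable def uP : MvPolynomial (Fin 2) ℝ :=
  170 * fP * hP + 91 * hP ^ 2 + 195 * fP * hP ^ 2 + 69 * hP ^ 3 + 75 * fP * hP ^ 3 +
    C (75 / 4 : ℝ) * hP ^ 4

/-- `Q = −t² − 6th(h + 1) − u(f,h)`. -/
noncomputable def QP : MvPolynomial (Fin 2) ℝ := -tP ^ 2 - 6 * tP * hP * (hP + 1) - uP

/-- Specialization `y := x` of the Pinchuk data, as univariate polynomials. -/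
noncomputable def t1 : Polynomial ℝ := Polynomial.X * Polynomial.X - 1
noncomputable def h1 : Polynomial ℝ := t1 * (Polynomial.X * t1 + 1)
noncomputable def f1 : Polynomial ℝ := (Polynomial.X * t1 + 1) ^ 2 * (t1 ^ 2 + Polynomial.X)
noncomputable def P1 : Polynomial ℝ := f1 + h1
noncomputable def Q1 : Polynomial ℝ := -t1 ^ 2 - 6 * t1 * h1 * (h1 + 1) -
  (170 * f1 * h1 + 91 * h1 ^ 2 + 195 * f1 * h1 ^ 2 + 69 * h1 ^ 3 + 75 * f1 * h1 ^ 3 +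
    Polynomial.C (75 / 4 : ℝ) * h1 ^ 4)

/-- Substituting `x ↦ X`, `y ↦ X` can only lower the degree. -/
lemma natDegree_aeval_XX_le (p : MvPolynomial (Fin 2) ℝ) :
    (MvPolynomial.aeval ![(Polynomial.X : Polynomial ℝ), Polynomial.X] p).natDegree ≤
      p.totalDegree := by
  conv_lhs => rw [p.as_sum]
  rw [map_sum]
  refine (Polynomial.natDegree_sum_le _ _).trans ?_
  rw [Finset.fold_max_le]
  refine ⟨Nat.zero_le _, fun d hd => ?_⟩
  simp only [Function.comp, MvPolynomial.aeval_monomial]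
  refine (Polynomial.natDegree_mul_le).trans ?_
  have h1 : (algebraMap ℝ (Polynomial ℝ) (MvPolynomial.coeff d p)).natDegree = 0 := by
    simp [Polynomial.natDegree_C]
  rw [h1, Nat.zero_add]
  refine le_trans ?_ (MvPolynomial.le_totalDegree hd)
  refine (Polynomial.natDegree_prod_le _ _).trans ?_
  rw [Finsupp.sum]
  apply Finset.sum_le_sum
  intro i _
  fin_cases i <;> simp [Polynomial.natDegree_X_pow]

lemma haP : MvPolynomial.aeval ![(Polynomial.X : Polynomial ℝ), Polynomial.X] PP = P1 := by
  simp [PP, fP, hP, tP, P1, f1, h1, t1, MvPolynomial.aeval_C]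

lemma haQ : MvPolynomial.aeval ![(Polynomial.X : Polynomial ℝ), Polynomial.X] QP = Q1 := by
  simp only [QP, uP, fP, hP, tP, Q1, f1, h1, t1, map_add, map_sub, map_mul, map_pow, map_neg,
    map_one, map_ofNat, MvPolynomial.aeval_X, MvPolynomial.aeval_C, Polynomial.algebraMap_eq,
    Matrix.cons_val_zero, Matrix.cons_val_one, Matrix.head_cons]

lemma hP1deg : P1.natDegree = 10 := by
  unfold P1 f1 h1 t1; compute_degree!

lemma hP1monic : P1.Monic := by
  unfold Polynomial.Monic Polynomial.leadingCoeff
  rw [hP1deg]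
  unfold P1 f1 h1 t1
  compute_degree!

lemma hQ1deg : Q1.natDegree = 25 := by
  unfold Q1 f1 h1 t1
  compute_degree!
  have h0 : ((Polynomial.X * Polynomial.X - 1 : Polynomial ℝ) ^ 2).coeff 25 = 0 :=
    Polynomial.coeff_eq_zero_of_natDegree_lt
      (lt_of_le_of_lt (by compute_degree : _ ≤ 4) (by norm_num))
  rw [h0]
  norm_num

/-- No Pinchuk map has total degree less than 25: for every univariate
`S ∈ ℝ[X]`, the total degree of `Q + S(P)` is at least 25. -/
theorem pinchuk_degree_at_least_25 (S : Polynomial ℝ) :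
    25 ≤ (QP + Polynomial.aeval PP S).totalDegree := by
  refine le_trans ?_ (natDegree_aeval_XX_le (QP + Polynomial.aeval PP S))
  rw [map_add, haQ, ← Polynomial.aeval_algHom_apply, haP]
  have hcomp : Polynomial.aeval P1 S = S.comp P1 := by
    rw [Polynomial.comp, Polynomial.aeval_def, Polynomial.algebraMap_eq]
  rw [hcomp]
  have hcompdeg : (S.comp P1).natDegree = S.natDegree * 10 := by
    rw [Polynomial.natDegree_comp, hP1deg]
  by_cases hn : S.natDegree ≤ 2
  · -- the composition has degree ≤ 20, so degree 25 coefficient survives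
    have hlt : (S.comp P1).natDegree < 25 := by
      rw [hcompdeg]; omega
    have hc : (Q1 + S.comp P1).coeff 25 ≠ 0 := by
      rw [Polynomial.coeff_add, Polynomial.coeff_eq_zero_of_natDegree_lt hlt, add_zero,
        ← hQ1deg]
      exact Polynomial.leadingCoeff_ne_zero.2
        (Polynomial.ne_zero_of_natDegree_gt (n := 0) (by rw [hQ1deg]; norm_num))
    exact Polynomial.le_natDegree_of_ne_zero hc
  · -- the composition has degree ≥ 30 and dominates
    push_neg at hn
    have hlt : Q1.natDegree < (S.comp P1).natDegree := by
      rw [hcompdeg, hQ1deg]; omega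
    rw [Polynomial.natDegree_add_eq_right_of_natDegree_lt hlt, hcompdeg]
    omega
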